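/- With d(x,y) = log(Q₀(y)/W(y|x)) and D(Q) = E_Q[d(X,Y)], the rate function evaluated at the channel satisfies R̄(D(P×W); (P×W)_Y) = I(P×W). That is, the minimum of I(Q) over joint distributions Q with X-marginal P, Y-marginal equal to (P×W)_Y, and D(Q) ≤ D(P×W), equals the mutual information I(P×W). -/
import Mathlib


open scoped BigOperators

variable {X Y : Type*} [Fintype X] [Fintype Y]

/-- X-marginal of a joint distribution on `X × Y`. -/
noncomputable def margX (Q : X × Y → ℝ) (x : X) : ℝ := ∑ y, Q (x, y)

/-- Y-marginal of a joint distribution on `X × Y`. -/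
noncomputable def margY (Q : X × Y → ℝ) (y : Y) : ℝ := ∑ x, Q (x, y)

/-- Mutual information `I(Q)` of a joint distribution `Q` on `X × Y`. -/
noncomputable def mutInfo (Q : X × Y → ℝ) : ℝ :=
  ∑ x, ∑ y, Q (x, y) * Real.log (Q (x, y) / (margX Q x * margY Q y))

/-- Expected "distortion" `D(Q) = E_Q[d(X,Y)]`. -/
noncomputable def Dav (d : X → Y → ℝ) (Q : X × Y → ℝ) : ℝ :=
  ∑ x, ∑ y, Q (x, y) * d x y

/-- `Q` is a joint distribution with X-marginal `P` and Y-marginal `QY`. -/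
def IsJoint (P : X → ℝ) (QY : Y → ℝ) (Q : X × Y → ℝ) : Prop :=
  (∀ p, 0 ≤ Q p) ∧ (∀ x, margX Q x = P x) ∧ (∀ y, margY Q y = QY y)

/-- The rate function `R̄(Δ; Q_Y) = inf{I(Q) : X-marginal P, Y-marginal Q_Y, E_Q d ≤ Δ}`. -/
noncomputable def Rbar (P : X → ℝ) (QY : Y → ℝ) (d : X → Y → ℝ) (Δ : ℝ) : ℝ :=
  sInf (mutInfo '' {Q : X × Y → ℝ | IsJoint P QY Q ∧ Dav d Q ≤ Δ})

/-- with `d(x,y) = log(Q₀(y)/W(y|x))` and `D(Q) = E_Q[d]`, the rate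
function evaluated at the channel satisfies `R̄(D(P×W); (P×W)_Y) = I(P×W)`. -/
theorem stmt9 (P : X → ℝ) (hP : (∀ x, 0 ≤ P x) ∧ ∑ x, P x = 1)
    (W : X → Y → ℝ) (hW : ∀ x y, 0 < W x y) (hWsum : ∀ x, ∑ y, W x y = 1)
    (Q0 : Y → ℝ) (hQ0 : ∀ y, 0 < Q0 y) (hQ0sum : ∑ y, Q0 y = 1)
    (d : X → Y → ℝ) (hd : ∀ x y, d x y = Real.log (Q0 y / W x y))
    (PW : X × Y → ℝ) (hPW : ∀ p, PW p = P p.1 * W p.1 p.2) :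
    Rbar P (margY PW) d (Dav d PW) = mutInfo PW := by
  obtain ⟨hPnn, hPsum⟩ := hP
  have hPWnn : ∀ p : X × Y, 0 ≤ PW p := fun p => by
    rw [hPW]; exact mul_nonneg (hPnn _) (hW _ _).le
  have hmX : ∀ x, margX PW x = P x := fun x => by
    simp only [margX, hPW, ← Finset.mul_sum, hWsum, mul_one]
  have hQYpos : ∀ y, 0 < margY PW y := by
    intro y
    have hex : ∃ x, 0 < P x := by
      by_contra h
      push_neg at h
      have hz : ∀ x, P x = 0 := fun x => le_antisymm (h x) (hPnn x)
      simp [hz] at hPsum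
    obtain ⟨x0, hx0⟩ := hex
    have : 0 < ∑ x, P x * W x y :=
      Finset.sum_pos' (fun x _ => mul_nonneg (hPnn x) (hW x y).le)
        ⟨x0, Finset.mem_univ x0, mul_pos hx0 (hW x0 y)⟩
    simpa [margY, hPW] using this
  have hPWsum1 : ∑ x, ∑ y, PW (x, y) = 1 := by
    calc ∑ x, ∑ y, PW (x, y) = ∑ x, P x :=
          Finset.sum_congr rfl fun x _ => hmX x
      _ = 1 := hPsum
  -- moving functions of y out of double sums
  have hmargfact : ∀ (R : X × Y → ℝ) (f : Y → ℝ),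
      ∑ x, ∑ y, R (x, y) * f y = ∑ y, margY R y * f y := by
    intro R f
    rw [Finset.sum_comm]
    exact Finset.sum_congr rfl fun y _ => by rw [margY, Finset.sum_mul]
  -- splitting D
  have hdsplit : ∀ (R : X × Y → ℝ), Dav d R =
      (∑ y, margY R y * Real.log (Q0 y)) - ∑ x, ∑ y, R (x, y) * Real.log (W x y) := by
    intro R
    have h1 : ∀ x y, R (x, y) * d x y
        = R (x, y) * Real.log (Q0 y) - R (x, y) * Real.log (W x y) := by
      intro x y
      rw [hd, Real.log_div (hQ0 y).ne' (hW x y).ne', mul_sub]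
    unfold Dav
    simp only [h1, Finset.sum_sub_distrib]
    rw [hmargfact]
  -- splitting S
  have hSsplit : ∀ (R : X × Y → ℝ),
      ∑ x, ∑ y, R (x, y) * Real.log (W x y / margY PW y)
      = (∑ x, ∑ y, R (x, y) * Real.log (W x y))
        - ∑ y, margY R y * Real.log (margY PW y) := by
    intro R
    have h1 : ∀ x y, R (x, y) * Real.log (W x y / margY PW y)
        = R (x, y) * Real.log (W x y) - R (x, y) * Real.log (margY PW y) := by
      intro x y
      rw [Real.log_div (hW x y).ne' (hQYpos y).ne', mul_sub]
    simp only [h1, Finset.sum_sub_distrib]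
    rw [hmargfact]
  -- identity: I(PW) = S(PW)
  have hA : mutInfo PW = ∑ x, ∑ y, PW (x, y) * Real.log (W x y / margY PW y) := by
    unfold mutInfo
    refine Finset.sum_congr rfl fun x _ => Finset.sum_congr rfl fun y _ => ?_
    rw [hmX]
    simp only [hPW]
    rcases eq_or_lt_of_le (hPnn x) with h0 | hpos
    · simp [← h0]
    · congr 1
      rw [mul_div_mul_left _ _ (ne_of_gt hpos)]
  -- key inequality: any feasible Q has I(Q) ≥ I(PW)
  have key : ∀ Q : X × Y → ℝ, IsJoint P (margY PW) Q → Dav d Q ≤ Dav d PW →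
      mutInfo PW ≤ mutInfo Q := by
    rintro Q ⟨hQnn, hQmX, hQmY⟩ hDav
    have hQsum1 : ∑ x, ∑ y, Q (x, y) = 1 := by
      calc ∑ x, ∑ y, Q (x, y) = ∑ x, P x :=
            Finset.sum_congr rfl fun x _ => hQmX x
        _ = 1 := hPsum
    have hQle : ∀ x y, Q (x, y) ≤ P x := by
      intro x y
      rw [← hQmX x]
      exact Finset.single_le_sum (fun y _ => hQnn (x, y)) (Finset.mem_univ y)
    -- step C: Σ PW log W ≤ Σ Q log W
    have hC : ∑ x, ∑ y, PW (x, y) * Real.log (W x y)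
        ≤ ∑ x, ∑ y, Q (x, y) * Real.log (W x y) := by
      rw [hdsplit Q, hdsplit PW] at hDav
      have hAeq : ∑ y, margY Q y * Real.log (Q0 y)
          = ∑ y, margY PW y * Real.log (Q0 y) :=
        Finset.sum_congr rfl fun y _ => by rw [hQmY]
      linarith
    -- step S: S(PW) ≤ S(Q)
    have hSle : ∑ x, ∑ y, PW (x, y) * Real.log (W x y / margY PW y)
        ≤ ∑ x, ∑ y, Q (x, y) * Real.log (W x y / margY PW y) := by
      rw [hSsplit Q, hSsplit PW]
      have hBeq : ∑ y, margY Q y * Real.log (margY PW y)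
          = ∑ y, margY PW y * Real.log (margY PW y) :=
        Finset.sum_congr rfl fun y _ => by rw [hQmY]
      linarith
    -- step B (Gibbs): S(Q) ≤ I(Q)
    have hB : ∑ x, ∑ y, Q (x, y) * Real.log (W x y / margY PW y) ≤ mutInfo Q := by
      have step : ∀ x y, Q (x, y) * Real.log (W x y / margY PW y)
          - Q (x, y) * Real.log (Q (x, y) / (margX Q x * margY Q y))
          ≤ PW (x, y) - Q (x, y) := by
        intro x y
        rcases eq_or_lt_of_le (hQnn (x, y)) with h0 | hq
        · rw [← h0]; simpa using hPWnn (x, y)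
        · have hPx : 0 < P x := lt_of_lt_of_le hq (hQle x y)
          have hPWpos : 0 < PW (x, y) := by
            rw [hPW]; exact mul_pos hPx (hW x y)
          have hlog : Real.log (W x y / margY PW y)
              - Real.log (Q (x, y) / (margX Q x * margY Q y))
              = Real.log (PW (x, y) / Q (x, y)) := by
            rw [hQmX x, hQmY y]
            simp only [hPW]
            rw [Real.log_div (hW x y).ne' (hQYpos y).ne',
                Real.log_div hq.ne' (mul_pos hPx (hQYpos y)).ne',
                Real.log_div (mul_pos hPx (hW x y)).ne' hq.ne',
                Real.log_mul hPx.ne' (hQYpos y).ne',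
                Real.log_mul hPx.ne' (hW x y).ne']
            ring
          rw [← mul_sub, hlog]
          have hlb := Real.log_le_sub_one_of_pos (div_pos hPWpos hq)
          calc Q (x, y) * Real.log (PW (x, y) / Q (x, y))
              ≤ Q (x, y) * (PW (x, y) / Q (x, y) - 1) :=
                mul_le_mul_of_nonneg_left hlb hq.le
            _ = PW (x, y) - Q (x, y) := by field_simp
      have hbound : ∑ x, ∑ y, (Q (x, y) * Real.log (W x y / margY PW y)
          - Q (x, y) * Real.log (Q (x, y) / (margX Q x * margY Q y)))
          ≤ ∑ x, ∑ y, (PW (x, y) - Q (x, y)) :=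
        Finset.sum_le_sum fun x _ => Finset.sum_le_sum fun y _ => step x y
      have hzero : ∑ x, ∑ y, (PW (x, y) - Q (x, y)) = 0 := by
        simp only [Finset.sum_sub_distrib, hPWsum1, hQsum1, sub_self]
      have hsplit : ∑ x, ∑ y, (Q (x, y) * Real.log (W x y / margY PW y)
          - Q (x, y) * Real.log (Q (x, y) / (margX Q x * margY Q y)))
          = (∑ x, ∑ y, Q (x, y) * Real.log (W x y / margY PW y)) - mutInfo Q := by
        simp only [Finset.sum_sub_distrib]
        rfl
      rw [hsplit, hzero] at hbound
      linarith
    calc mutInfo PW = ∑ x, ∑ y, PW (x, y) * Real.log (W x y / margY PW y) := hA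
      _ ≤ ∑ x, ∑ y, Q (x, y) * Real.log (W x y / margY PW y) := hSle
      _ ≤ mutInfo Q := hB
  have hmemPW : mutInfo PW ∈
      mutInfo '' {Q : X × Y → ℝ | IsJoint P (margY PW) Q ∧ Dav d Q ≤ Dav d PW} :=
    ⟨PW, ⟨⟨hPWnn, hmX, fun _ => rfl⟩, le_refl _⟩, rfl⟩
  have hlb : ∀ r ∈ mutInfo ''
      {Q : X × Y → ℝ | IsJoint P (margY PW) Q ∧ Dav d Q ≤ Dav d PW},
      mutInfo PW ≤ r := by
    rintro r ⟨Q, ⟨hQ, hD⟩, rfl⟩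
    exact key Q hQ hD
  unfold Rbar
  exact le_antisymm (csInf_le ⟨mutInfo PW, fun r hr => hlb r hr⟩ hmemPW)
    (le_csInf ⟨_, hmemPW⟩ hlb)
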